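/- arXiv:2107.03633 — 4 statements merged into one kernel-verified Lean document; each statement's English description precedes it below -/
import Mathlib

section
/- Suppose L : H → ℝ is a functional on a Hilbert space that is bounded above, and a_t is a gradient ascent trajectory dа_t/dt = ∇L(a_t) with a₀ ∈ H. Then ‖a_t‖/√t → 0 as t → ∞. -/
open Real Filter Topology

/-- along a gradient ascent flow `ȧ_t = ∇L(a_t)` of a functional
`L` on a Hilbert space that is bounded above, `‖a_t‖/√t → 0` as `t → ∞`. -/
theorem gradient_ascent_norm_growth
    {H : Type*} [NormedAddCommGroup H] [InnerProductSpace ℝ H] [CompleteSpace H]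
    (L : H → ℝ) (hbdd : BddAbove (Set.range L))
    (g : H → H) (hg : ∀ p, HasGradientAt L (g p) p)
    (a : ℝ → H) (ha : ∀ t, HasDerivAt a (g (a t)) t) :
    Tendsto (fun t : ℝ => ‖a t‖ / Real.sqrt t) atTop (𝓝 0) := by
  set f : ℝ → ℝ := fun t => L (a t) with hfdef
  have hf : ∀ t, HasDerivAt f (‖g (a t)‖ ^ 2) t := by
    intro t
    have h1 := (hg (a t)).hasFDerivAt.comp_hasDerivAt t (ha t)
    simp [real_inner_self_eq_norm_sq] at h1
    exact h1
  -- key inequality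
  have key : ∀ c : ℝ, 0 < c → ∀ s t : ℝ, s ≤ t →
      ‖a t - a s‖ ≤ (f t - f s) / (2 * c) + c * (t - s) / 2 := by
    intro c hc s t hst
    have hB : ∀ u, HasDerivAt (fun u => (f u - f s) / (2 * c) + c * (u - s) / 2)
        (‖g (a u)‖ ^ 2 / (2 * c) + c / 2) u := by
      intro u
      have := (((hf u).sub_const (f s)).div_const (2 * c)).add
        ((((hasDerivAt_id u).sub_const s).const_mul c).div_const 2)
      simp [mul_one] at this
      exact this
    have := image_norm_le_of_norm_deriv_right_le_deriv_boundary
      (f := fun u => a u - a s) (f' := fun u => g (a u)) (a := s) (b := t)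
      (fun u _ => (((ha u).sub_const (a s)).continuousAt).continuousWithinAt)
      (fun u _ => (((ha u).sub_const (a s)).hasDerivWithinAt))
      (by simp)
      hB
      (fun u _ => by
        have h7 : ‖g (a u)‖ ≤ (‖g (a u)‖ ^ 2 + c ^ 2) / (2 * c) := by
          rw [le_div_iff₀ (by positivity)]
          nlinarith [sq_nonneg (‖g (a u)‖ - c)]
        have h8 : (‖g (a u)‖ ^ 2 + c ^ 2) / (2 * c) = ‖g (a u)‖ ^ 2 / (2 * c) + c / 2 := by
          field_simp
        simpa [h8] using h7)
      (Set.right_mem_Icc.2 hst)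
    exact this
  have hmono : Monotone f := by
    apply monotone_of_deriv_nonneg (fun t => (hf t).differentiableAt)
    intro t
    rw [(hf t).deriv]
    positivity
  have hbddf : BddAbove (Set.range f) := by
    apply hbdd.mono
    rintro _ ⟨t, rfl⟩
    exact ⟨a t, rfl⟩
  set ℓ : ℝ := ⨆ t, f t with hldef
  have hlim : Tendsto f atTop (𝓝 ℓ) := tendsto_atTop_ciSup hmono hbddf
  have hle : ∀ t, f t ≤ ℓ := fun t => le_ciSup hbddf t
  rw [Metric.tendsto_atTop]
  intro ε hε
  -- choose s ≥ 0 with ℓ - f s < ε^2/16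
  obtain ⟨s, hs0, hs⟩ : ∃ s : ℝ, 0 ≤ s ∧ ℓ - f s < ε ^ 2 / 16 := by
    have : ∀ᶠ t in atTop, ℓ - f t < ε ^ 2 / 16 := by
      have := hlim.eventually (eventually_gt_nhds (show ℓ - ε ^ 2 / 16 < ℓ by linarith [div_pos (pow_pos hε 2) (show (0:ℝ) < 16 by norm_num)]))
      filter_upwards [this] with t ht
      linarith
    obtain ⟨s, hs⟩ := (this.and (eventually_ge_atTop (0 : ℝ))).exists
    exact ⟨s, hs.2, hs.1⟩
  refine ⟨max (max s 1) ((2 * ‖a s‖ / ε) ^ 2 + 1), fun t ht => ?_⟩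
  have hts : s ≤ t := le_trans (le_trans (le_max_left _ _) (le_max_left _ _)) ht
  have ht1 : (1 : ℝ) ≤ t := le_trans (le_trans (le_max_right _ _) (le_max_left _ _)) ht
  have htq : (2 * ‖a s‖ / ε) ^ 2 + 1 ≤ t := le_trans (le_max_right _ _) ht
  have htpos : 0 < t := by linarith
  have hst : 0 < Real.sqrt t := Real.sqrt_pos.2 htpos
  have hsqt : Real.sqrt t * Real.sqrt t = t := Real.mul_self_sqrt htpos.le
  have hc : 0 < ε / (2 * Real.sqrt t) := by positivity
  have h1 := key _ hc s t hts
  have hnorm : ‖a t‖ ≤ ‖a s‖ + (ℓ - f s) * Real.sqrt t / ε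
      + ε / (2 * Real.sqrt t) * (t - s) / 2 := by
    have h2 : ‖a t‖ - ‖a s‖ ≤ ‖a t - a s‖ := norm_sub_norm_le _ _
    have h3 : (f t - f s) / (2 * (ε / (2 * Real.sqrt t))) = (f t - f s) * Real.sqrt t / ε := by
      field_simp
    rw [h3] at h1
    have h5 : (f t - f s) * Real.sqrt t / ε ≤ (ℓ - f s) * Real.sqrt t / ε := by
      gcongr
      exact hle t
    linarith
  have hA : (ℓ - f s) * Real.sqrt t / ε < ε * Real.sqrt t / 16 := by
    rw [div_lt_iff₀ hε]
    have : (ℓ - f s) * Real.sqrt t < ε ^ 2 / 16 * Real.sqrt t :=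
      mul_lt_mul_of_pos_right hs hst
    nlinarith
  have hB2 : ε / (2 * Real.sqrt t) * (t - s) / 2 ≤ ε * Real.sqrt t / 4 := by
    rw [div_mul_eq_mul_div, div_div, div_le_div_iff₀ (by positivity) (by norm_num)]
    nlinarith
  have hAs : ‖a s‖ ≤ ε * Real.sqrt t / 2 := by
    have h6 : 2 * ‖a s‖ / ε ≤ Real.sqrt t := by
      have := Real.sqrt_le_sqrt (show (2 * ‖a s‖ / ε) ^ 2 ≤ t by linarith)
      rwa [Real.sqrt_sq (by positivity)] at this
    rw [div_le_iff₀ hε] at h6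
    linarith
  have hεst : 0 < ε * Real.sqrt t := mul_pos hε hst
  have hfinal : ‖a t‖ < ε * Real.sqrt t := by linarith
  have : dist (‖a t‖ / Real.sqrt t) 0 = ‖a t‖ / Real.sqrt t := by
    rw [Real.dist_eq, sub_zero, abs_of_nonneg (by positivity)]
  rw [this, div_lt_iff₀ hst]
  linarith
end

section
/- Let 𝒩 be an absolutely continuous probability measure on ℝ^d with finite second moment, P* ∈ P₂(ℝ^d), and G ∈ L²(𝒩; ℝ^d) with P = G#𝒩. Then W₂(P, P*) = inf{ ‖G − G*‖_{L²(𝒩)} : G* ∈ L²(𝒩;ℝ^d), G*#𝒩 = P* }. -/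
open MeasureTheory Real Filter Topology
open scoped ENNReal BigOperators

/-- The 2-Wasserstein distance, defined as an infimum over couplings. -/
noncomputable def W2 {α : Type*} [MeasurableSpace α] [PseudoEMetricSpace α]
    (μ ν : Measure α) : ℝ≥0∞ :=
  ⨅ (cpl : Measure (α × α)) (_ : cpl.map Prod.fst = μ) (_ : cpl.map Prod.snd = ν),
    (∫⁻ p, edist p.1 p.2 ^ 2 ∂cpl) ^ (1/2 : ℝ)

section Aux

open Set ProbabilityTheory

noncomputable def unifI : Measure ℝ := volume.restrict (Set.Ioo (0:ℝ) 1)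

instance : IsProbabilityMeasure unifI := ⟨by simp [unifI, Real.volume_Ioo]⟩

lemma volume_Ioo_inter_Iic {c : ℝ} (h0 : 0 ≤ c) (h1 : c ≤ 1) :
    volume (Set.Ioo (0:ℝ) 1 ∩ Set.Iic c) = ENNReal.ofReal c := by
  rcases lt_or_ge c 1 with hc | hc
  · have : Set.Ioo (0:ℝ) 1 ∩ Set.Iic c = Set.Ioc 0 c := by
      ext t
      constructor
      · rintro ⟨⟨ht0, _⟩, htc⟩; exact ⟨ht0, htc⟩
      · rintro ⟨ht0, htc⟩; exact ⟨⟨ht0, lt_of_le_of_lt htc hc⟩, htc⟩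
    rw [this, Real.volume_Ioc, sub_zero]
  · have hc1 : c = 1 := le_antisymm h1 hc
    subst hc1
    have : Set.Ioo (0:ℝ) 1 ∩ Set.Iic 1 = Set.Ioo 0 1 := by
      ext t; exact ⟨fun h => h.1, fun h => ⟨h, h.2.le⟩⟩
    rw [this, Real.volume_Ioo]; norm_num

noncomputable def qtl (μ : Measure ℝ) (t : ℝ) : ℝ := sInf {x | t ≤ cdf μ x}

lemma qtl_le_iff (μ : Measure ℝ) [IsProbabilityMeasure μ] {t : ℝ} (ht : t ∈ Set.Ioo (0:ℝ) 1)
    {x : ℝ} : qtl μ t ≤ x ↔ t ≤ cdf μ x := by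
  obtain ⟨ht0, ht1⟩ := ht
  have hne : {y | t ≤ cdf μ y}.Nonempty := by
    obtain ⟨y, hy⟩ := ((tendsto_cdf_atTop μ).eventually_const_lt ht1).exists
    exact ⟨y, hy.le⟩
  have hbdd : BddBelow {y | t ≤ cdf μ y} := by
    obtain ⟨y₀, hy₀⟩ := ((tendsto_cdf_atBot μ).eventually_lt_const ht0).exists
    refine ⟨y₀, fun y hy => ?_⟩
    by_contra h
    exact absurd (le_trans hy ((monotone_cdf μ) (le_of_not_ge h))) (not_le.2 hy₀)
  constructor
  · intro h
    have hq : t ≤ cdf μ (qtl μ t) := by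
      rw [← (cdf μ).iInf_Ioi_eq (qtl μ t)]
      refine le_ciInf fun ⟨r, hr⟩ => ?_
      obtain ⟨y, hy, hyr⟩ := csInf_lt_iff hbdd hne |>.1 hr
      exact le_trans hy ((monotone_cdf μ) hyr.le)
    exact le_trans hq ((monotone_cdf μ) h)
  · intro h
    exact csInf_le hbdd h

lemma qtl_monotoneOn (μ : Measure ℝ) [IsProbabilityMeasure μ] :
    MonotoneOn (qtl μ) (Set.Ioo (0:ℝ) 1) := by
  intro t₁ h₁ t₂ h₂ h12
  have hne : {y | t₂ ≤ cdf μ y}.Nonempty := by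
    obtain ⟨y, hy⟩ := ((tendsto_cdf_atTop μ).eventually_const_lt h₂.2).exists
    exact ⟨y, hy.le⟩
  have hbdd : BddBelow {y | t₁ ≤ cdf μ y} := by
    obtain ⟨y₀, hy₀⟩ := ((tendsto_cdf_atBot μ).eventually_lt_const h₁.1).exists
    refine ⟨y₀, fun y hy => ?_⟩
    by_contra h
    exact absurd (le_trans hy ((monotone_cdf μ) (le_of_not_ge h))) (not_le.2 hy₀)
  exact csInf_le_csInf hbdd hne (fun y hy => le_trans h12 hy)

lemma exists_map_unifI (μ : Measure ℝ) [IsProbabilityMeasure μ] :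
    ∃ q : ℝ → ℝ, Measurable q ∧ Measure.map q unifI = μ := by
  have haem : AEMeasurable (qtl μ) unifI :=
    aemeasurable_restrict_of_monotoneOn measurableSet_Ioo (qtl_monotoneOn μ)
  have hmap : Measure.map (qtl μ) unifI = μ := by
    have : IsProbabilityMeasure (Measure.map (qtl μ) unifI) :=
      Measure.isProbabilityMeasure_map haem
    refine Measure.ext_of_Iic _ _ (fun x => ?_)
    rw [Measure.map_apply_of_aemeasurable haem measurableSet_Iic]
    have hset : qtl μ ⁻¹' Set.Iic x ∩ Set.Ioo (0:ℝ) 1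
        = Set.Ioo (0:ℝ) 1 ∩ Set.Iic (cdf μ x) := by
      ext t
      constructor
      · rintro ⟨h1, h2⟩; exact ⟨h2, (qtl_le_iff μ h2).1 h1⟩
      · rintro ⟨h1, h2⟩; exact ⟨(qtl_le_iff μ h1).2 h2, h1⟩
    rw [unifI, Measure.restrict_apply' measurableSet_Ioo, hset,
      volume_Ioo_inter_Iic (cdf_nonneg μ x) (cdf_le_one μ x), ofReal_cdf μ x]
  obtain ⟨q, hqm, hq⟩ := haem
  refine ⟨q, hqm, ?_⟩
  rw [← Measure.map_congr hq, hmap]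

lemma continuous_cdf_of_atomless (μ : Measure ℝ) [IsProbabilityMeasure μ]
    (h : ∀ x : ℝ, μ {x} = 0) : Continuous (cdf μ) := by
  rw [continuous_iff_continuousAt]
  intro x
  rw [(monotone_cdf μ).continuousAt_iff_leftLim_eq_rightLim, (cdf μ).rightLim_eq]
  have h1 : (cdf μ).measure {x} = 0 := by rw [measure_cdf]; exact h x
  rw [StieltjesFunction.measure_singleton] at h1
  have h2 : cdf μ x - Function.leftLim (cdf μ) x ≤ 0 := by
    by_contra hc
    rw [ENNReal.ofReal_eq_zero] at h1
    exact absurd h1 (not_le.2 (not_le.1 hc))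
  have h3 : Function.leftLim (cdf μ) x ≤ cdf μ x :=
    (monotone_cdf μ).leftLim_le le_rfl
  linarith [sub_nonpos.1 h2]

lemma map_cdf_of_atomless (μ : Measure ℝ) [IsProbabilityMeasure μ]
    (h : ∀ x : ℝ, μ {x} = 0) : Measure.map (cdf μ) μ = unifI := by
  have hcont : Continuous (cdf μ) := continuous_cdf_of_atomless μ h
  have hmeas : Measurable (cdf μ) := (monotone_cdf μ).measurable
  refine Measure.ext_of_Iic _ _ (fun t => ?_)
  rw [Measure.map_apply hmeas measurableSet_Iic]
  rw [unifI, Measure.restrict_apply' measurableSet_Ioo]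
  rcases lt_or_ge t 0 with ht0 | ht0
  · have h1 : cdf μ ⁻¹' Set.Iic t = ∅ := by
      ext y; simp only [Set.mem_preimage, Set.mem_Iic, Set.mem_empty_iff_false, iff_false]
      exact fun hc => absurd (le_trans (cdf_nonneg μ y) hc) (not_le.2 ht0)
    have h2 : Set.Iic t ∩ Set.Ioo (0:ℝ) 1 = ∅ := by
      ext y; simp only [Set.mem_inter_iff, Set.mem_Iic, Set.mem_Ioo,
        Set.mem_empty_iff_false, iff_false]
      rintro ⟨hy, hy0, _⟩; linarith
    rw [h1, h2]; simp
  rcases lt_or_ge t 1 with ht1 | ht1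
  · -- 0 ≤ t < 1
    have hIic : Set.Iic t ∩ Set.Ioo (0:ℝ) 1 = Set.Ioc 0 t := by
      ext y
      constructor
      · rintro ⟨h1, h2, _⟩; exact ⟨h2, h1⟩
      · rintro ⟨h1, h2⟩; exact ⟨h2, h1, lt_of_le_of_lt h2 ht1⟩
    rw [hIic, Real.volume_Ioc, sub_zero]
    set S := cdf μ ⁻¹' Set.Iic t with hS
    rcases Set.eq_empty_or_nonempty S with hSe | hSne
    ·
      have ht : t = 0 := by
        by_contra hne
        have htpos : 0 < t := lt_of_le_of_ne ht0 (Ne.symm hne)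
        obtain ⟨y, hy⟩ := ((tendsto_cdf_atBot μ).eventually_lt_const htpos).exists
        exact absurd (Set.mem_preimage.2 (Set.mem_Iic.2 hy.le)) (by rw [← hS]; simp [hSe])
      rw [hSe, ht]; simp
    · have hbdd : BddAbove S := by
        obtain ⟨y₁, hy₁⟩ := ((tendsto_cdf_atTop μ).eventually_const_lt ht1).exists
        refine ⟨y₁, fun y hy => ?_⟩
        by_contra hc
        exact absurd (lt_of_lt_of_le hy₁ ((monotone_cdf μ) (le_of_not_ge hc)))
          (not_lt.2 (Set.mem_Iic.1 (Set.mem_preimage.1 hy)))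
      have hScl : IsClosed S := IsClosed.preimage hcont isClosed_Iic
      have hsmem : sSup S ∈ S := hScl.csSup_mem hSne hbdd
      have hcdfs : cdf μ (sSup S) ≤ t := hsmem
      have hSeq : S = Set.Iic (sSup S) := by
        ext y
        constructor
        · exact fun hy => le_csSup hbdd hy
        · intro hy
          exact Set.mem_preimage.2 (Set.mem_Iic.2
            (le_trans ((monotone_cdf μ) hy) hcdfs))
      have hcdft : cdf μ (sSup S) = t := by
        by_contra hne
        have hlt : cdf μ (sSup S) < t := lt_of_le_of_ne hcdfs hne
        have hev : ∀ᶠ y in 𝓝 (sSup S), cdf μ y < t :=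
          hcont.continuousAt.eventually_lt_const hlt
        have hev' : ∀ᶠ y in 𝓝[>] (sSup S), cdf μ y < t :=
          hev.filter_mono nhdsWithin_le_nhds
        obtain ⟨y, hy1, hy2⟩ := (hev'.and eventually_mem_nhdsWithin).exists
        exact absurd (le_csSup hbdd (Set.mem_preimage.2 (Set.mem_Iic.2 hy1.le)))
          (not_le.2 hy2)
      rw [hSeq, ← ofReal_cdf μ (sSup S), hcdft]
  · -- t ≥ 1
    have h1 : cdf μ ⁻¹' Set.Iic t = Set.univ := by
      ext y; simp only [Set.mem_preimage, Set.mem_Iic, Set.mem_univ, iff_true]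
      exact le_trans (cdf_le_one μ y) ht1
    have h2 : Set.Iic t ∩ Set.Ioo (0:ℝ) 1 = Set.Ioo 0 1 := by
      ext y
      exact ⟨fun hy => hy.2, fun hy => ⟨le_trans hy.2.le ht1, hy⟩⟩
    rw [h1, h2, Real.volume_Ioo, measure_univ]; norm_num

lemma euclidean_uncountable {d : ℕ} (hd : d ≠ 0) :
    Uncountable (EuclideanSpace ℝ (Fin d)) := by
  haveI : Nonempty (Fin d) := ⟨⟨0, Nat.pos_of_ne_zero hd⟩⟩
  have hinj : Function.Injective
      (fun r : ℝ => ((WithLp.equiv 2 (Fin d → ℝ)).symm (fun _ => r))) := by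
    intro a b hab
    have := congrArg (WithLp.equiv 2 (Fin d → ℝ)) hab
    simp only [Equiv.apply_symm_apply] at this
    exact congrFun this (Classical.arbitrary (Fin d))
  exact hinj.uncountable

lemma exists_map_of_atomless {d : ℕ} (hd : d ≠ 0)
    (μ₁ μ₂ : Measure (EuclideanSpace ℝ (Fin d)))
    [IsProbabilityMeasure μ₁] [IsProbabilityMeasure μ₂]
    (h1 : ∀ x, μ₁ {x} = 0) :
    ∃ f : EuclideanSpace ℝ (Fin d) → EuclideanSpace ℝ (Fin d),
      Measurable f ∧ Measure.map f μ₁ = μ₂ := by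
  haveI : Uncountable (EuclideanSpace ℝ (Fin d)) := euclidean_uncountable hd
  let e : EuclideanSpace ℝ (Fin d) ≃ᵐ ℝ :=
    PolishSpace.measurableEquivOfNotCountable not_countable not_countable
  set ν₁ := Measure.map e μ₁ with hν₁
  haveI : IsProbabilityMeasure ν₁ := Measure.isProbabilityMeasure_map e.measurable.aemeasurable
  haveI : IsProbabilityMeasure (Measure.map e μ₂) :=
    Measure.isProbabilityMeasure_map e.measurable.aemeasurable
  have hν₁atom : ∀ x : ℝ, ν₁ {x} = 0 := by
    intro x
    rw [hν₁, Measure.map_apply e.measurable (measurableSet_singleton x)]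
    have hpre : e ⁻¹' {x} = {e.symm x} := by
      ext y
      simp only [Set.mem_preimage, Set.mem_singleton_iff]
      constructor
      · intro h; rw [← h]; exact (e.symm_apply_apply y).symm
      · intro h; rw [h]; exact e.apply_symm_apply x
    rw [hpre]; exact h1 _
  obtain ⟨q, hqm, hq⟩ := exists_map_unifI (Measure.map e μ₂)
  refine ⟨fun x => e.symm (q (cdf ν₁ (e x))), ?_, ?_⟩
  · exact e.symm.measurable.comp (hqm.comp ((monotone_cdf ν₁).measurable.comp e.measurable))
  · have h2 : Measure.map (cdf ν₁) ν₁ = unifI := map_cdf_of_atomless ν₁ hν₁atom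
    have : (fun x => e.symm (q (cdf ν₁ (e x)))) = (⇑e.symm ∘ q ∘ ⇑(cdf ν₁) ∘ ⇑e) := rfl
    rw [this]
    have m1 : Measure.map (⇑(cdf ν₁) ∘ ⇑e) μ₁ = unifI := by
      rw [← Measure.map_map (monotone_cdf ν₁).measurable e.measurable, ← hν₁, h2]
    have m2 : Measure.map (q ∘ (⇑(cdf ν₁) ∘ ⇑e)) μ₁ = Measure.map e μ₂ := by
      rw [← Measure.map_map hqm ((monotone_cdf ν₁).measurable.comp e.measurable), m1, hq]
    rw [← Measure.map_map e.symm.measurable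
        (hqm.comp ((monotone_cdf ν₁).measurable.comp e.measurable)), m2,
      Measure.map_map e.symm.measurable e.measurable]
    simp

lemma exists_cells (d : ℕ) (ε : ℝ) (hε : 0 < ε) :
    ∃ (C : ℕ → Set (EuclideanSpace ℝ (Fin d))) (c : ℕ → EuclideanSpace ℝ (Fin d)),
      (∀ n, MeasurableSet (C n)) ∧ Pairwise (Function.onFun Disjoint C) ∧
      (⋃ n, C n) = Set.univ ∧ ∀ n, ∀ y ∈ C n, dist y (c n) < ε := by
  set u := TopologicalSpace.denseSeq (EuclideanSpace ℝ (Fin d))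
  refine ⟨disjointed (fun n => Metric.ball (u n) ε), u,
    fun n => MeasurableSet.disjointed (fun k => measurableSet_ball) n,
    disjoint_disjointed _, ?_, ?_⟩
  · rw [iUnion_disjointed]
    ext y
    simp only [Set.mem_iUnion, Metric.mem_ball, Set.mem_univ, iff_true]
    obtain ⟨n, hn⟩ := (TopologicalSpace.denseRange_denseSeq
      (EuclideanSpace ℝ (Fin d))).exists_dist_lt y hε
    exact ⟨n, by simpa [u, dist_comm] using hn⟩
  · intro n y hy
    have := disjointed_subset (fun n => Metric.ball (u n) ε) n hy
    rwa [Metric.mem_ball] at this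

lemma piecewise_measurable {α β : Type*} [MeasurableSpace α] [MeasurableSpace β]
    (C : ℕ → Set α) (hC : ∀ n, MeasurableSet (C n))
    (hdisj : Pairwise (Function.onFun Disjoint C))
    (hcov : (⋃ n, C n) = Set.univ) (f : ℕ → α → β) (hf : ∀ n, Measurable (f n)) :
    ∃ g : α → β, Measurable g ∧ ∀ n, ∀ x ∈ C n, g x = f n x := by
  classical
  set idx : α → ℕ := fun x => sInf {n | x ∈ C n} with hidxdef
  have hidx : ∀ n, ∀ x ∈ C n, idx x = n := by
    intro n x hx
    have hset : {m | x ∈ C m} = {n} := by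
      ext m
      simp only [Set.mem_setOf_eq, Set.mem_singleton_iff]
      constructor
      · intro hm
        by_contra hne
        exact Set.disjoint_left.1 (hdisj hne) hm hx
      · intro h; rw [h]; exact hx
    rw [hidxdef]; simp only [hset, csInf_singleton]
  refine ⟨fun x => f (idx x) x, ?_, fun n x hx => by simp only []; rw [hidx n x hx]⟩
  intro S hS
  have hpre : (fun x => f (idx x) x) ⁻¹' S = ⋃ n, C n ∩ f n ⁻¹' S := by
    ext x
    simp only [Set.mem_preimage, Set.mem_iUnion, Set.mem_inter_iff]
    constructor
    · intro hx
      have hxc : x ∈ ⋃ n, C n := hcov ▸ Set.mem_univ x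
      obtain ⟨n, hn⟩ := Set.mem_iUnion.1 hxc
      exact ⟨n, hn, by rw [hidx n x hn] at hx; exact hx⟩
    · rintro ⟨n, hn, hfn⟩
      rwa [hidx n x hn]
  rw [hpre]
  exact MeasurableSet.iUnion fun n => (hC n).inter (hf n hS)

variable {d : ℕ}

local notation "E" => EuclideanSpace ℝ (Fin d)

lemma construction (hd : d ≠ 0) (nu Pstar : Measure (EuclideanSpace ℝ (Fin d)))
    [IsProbabilityMeasure nu] [IsProbabilityMeasure Pstar]
    (hatom : ∀ x, nu {x} = 0)
    (G : EuclideanSpace ℝ (Fin d) → EuclideanSpace ℝ (Fin d)) (hGm : Measurable G)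
    (cp : Measure (EuclideanSpace ℝ (Fin d) × EuclideanSpace ℝ (Fin d)))
    [IsProbabilityMeasure cp]
    (hcp1 : cp.map Prod.fst = Measure.map G nu) (hcp2 : cp.map Prod.snd = Pstar)
    (ε : ℝ) (hε : 0 < ε) :
    ∃ Gs : EuclideanSpace ℝ (Fin d) → EuclideanSpace ℝ (Fin d),
      Measurable Gs ∧ Measure.map Gs nu = Pstar ∧
      (∫⁻ x, (‖G x - Gs x‖₊ : ℝ≥0∞) ^ (2:ℝ) ∂nu) ^ (1/2:ℝ) ≤
        (∫⁻ p, edist p.1 p.2 ^ (2:ℝ) ∂cp) ^ (1/2:ℝ) + 2 * ENNReal.ofReal ε := by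
  obtain ⟨C, c, hCmeas, hCdisj, hCcov, hCdist⟩ := exists_cells d ε hε
  set A : ℕ → Set E := fun n => G ⁻¹' (C n) with hA
  have hAmeas : ∀ n, MeasurableSet (A n) := fun n => hGm (hCmeas n)
  have hAdisj : Pairwise (Function.onFun Disjoint A) :=
    fun m n hmn => Set.disjoint_left.2 fun x hxm hxn =>
      Set.disjoint_left.1 (hCdisj hmn) hxm hxn
  have hAcov : (⋃ n, A n) = Set.univ := by
    rw [hA, ← Set.preimage_iUnion, hCcov, Set.preimage_univ]
  set m : ℕ → ℝ≥0∞ := fun n => nu (A n) with hm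
  have hmfin : ∀ n, m n ≠ ⊤ := fun n => (measure_ne_top nu _)
  have hcpC : ∀ n, cp ((C n) ×ˢ (Set.univ : Set E)) = m n := by
    intro n
    rw [Set.prod_univ, ← Measure.map_apply measurable_fst (hCmeas n), hcp1,
      Measure.map_apply hGm (hCmeas n)]
  -- the per-cell transport maps
  have hfex : ∀ n, ∃ f : EuclideanSpace ℝ (Fin d) → EuclideanSpace ℝ (Fin d),
      Measurable f ∧ Measure.map f (nu.restrict (A n))
        = (cp.restrict ((C n) ×ˢ (Set.univ : Set E))).map Prod.snd := by
    intro n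
    by_cases hmn : m n = 0
    · refine ⟨G, hGm, ?_⟩
      have h1 : nu.restrict (A n) = 0 := Measure.restrict_eq_zero.2 hmn
      have h2 : cp.restrict ((C n) ×ˢ (Set.univ : Set E)) = 0 :=
        Measure.restrict_eq_zero.2 (by rw [hcpC n]; exact hmn)
      rw [h1, h2]
      simp
    · haveI h1 : IsProbabilityMeasure ((m n)⁻¹ • nu.restrict (A n)) := by
        constructor
        rw [Measure.smul_apply, Measure.restrict_apply_univ, smul_eq_mul]
        exact ENNReal.inv_mul_cancel hmn (hmfin n)
      haveI h2 : IsProbabilityMeasure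
          ((m n)⁻¹ • (cp.restrict ((C n) ×ˢ (Set.univ : Set E))).map Prod.snd) := by
        constructor
        rw [Measure.smul_apply, smul_eq_mul,
          Measure.map_apply measurable_snd MeasurableSet.univ, Set.preimage_univ,
          Measure.restrict_apply_univ, hcpC n]
        exact ENNReal.inv_mul_cancel hmn (hmfin n)
      have hat : ∀ x, ((m n)⁻¹ • nu.restrict (A n)) {x} = 0 := by
        intro x
        rw [Measure.smul_apply, smul_eq_mul]
        have : nu.restrict (A n) {x} ≤ nu {x} :=
          Measure.restrict_apply_le _ _
        rw [hatom x] at this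
        rw [le_antisymm this zero_le, mul_zero]
      obtain ⟨f, hf1, hf2⟩ := exists_map_of_atomless hd ((m n)⁻¹ • nu.restrict (A n))
        ((m n)⁻¹ • (cp.restrict ((C n) ×ˢ (Set.univ : Set E))).map Prod.snd) hat
      refine ⟨f, hf1, ?_⟩
      have h3 := hf2
      rw [Measure.map_smul (m n)⁻¹ (nu.restrict (A n)) f] at h3
      have h4 := congrArg (fun μ : Measure (EuclideanSpace ℝ (Fin d)) => m n • μ) h3
      simp only [smul_smul, ENNReal.mul_inv_cancel hmn (hmfin n), one_smul] at h4
      exact h4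
  choose f hfm hfmap using hfex
  obtain ⟨Gs, hGsm, hGseq⟩ := piecewise_measurable A hAmeas hAdisj hAcov f hfm
  -- the center function
  obtain ⟨h0, hh0m, hh0eq⟩ := piecewise_measurable C hCmeas hCdisj hCcov
    (fun n _ => c n) (fun n => measurable_const)
  have hh0dist : ∀ y, dist y (h0 y) < ε := by
    intro y
    obtain ⟨n, hn⟩ := Set.mem_iUnion.1 (hCcov ▸ Set.mem_univ y)
    rw [hh0eq n y hn]
    exact hCdist n y hn
  -- pushforward identity
  have hkey : ∀ n, ∀ S : Set (EuclideanSpace ℝ (Fin d)), MeasurableSet S →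
      nu (A n ∩ f n ⁻¹' S) = cp ((C n) ×ˢ S) := by
    intro n S hS
    have h1 : nu (A n ∩ f n ⁻¹' S) = nu.restrict (A n) (f n ⁻¹' S) := by
      rw [Measure.restrict_apply' (hAmeas n), Set.inter_comm]
    rw [h1, ← Measure.map_apply (hfm n) hS, hfmap n,
      Measure.map_apply measurable_snd hS,
      Measure.restrict_apply' ((hCmeas n).prod MeasurableSet.univ)]
    congr 1
    ext p
    simp only [Set.mem_inter_iff, Set.mem_preimage, Set.mem_prod, Set.mem_univ, and_true]
    exact and_comm
  have hGsmap : Measure.map Gs nu = Pstar := by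
    refine Measure.ext fun S hS => ?_
    rw [Measure.map_apply hGsm hS]
    have hsplit : Gs ⁻¹' S = ⋃ n, A n ∩ f n ⁻¹' S := by
      ext x
      simp only [Set.mem_preimage, Set.mem_iUnion, Set.mem_inter_iff]
      constructor
      · intro hx
        obtain ⟨n, hn⟩ := Set.mem_iUnion.1 (hAcov ▸ Set.mem_univ x)
        exact ⟨n, hn, by rw [← hGseq n x hn]; exact hx⟩
      · rintro ⟨n, hn, hfn⟩
        rw [hGseq n x hn]; exact hfn
    have hdisj2 : Pairwise (Function.onFun Disjoint (fun n => A n ∩ f n ⁻¹' S)) :=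
      fun i j hij => (hAdisj hij).mono Set.inter_subset_left Set.inter_subset_left
    rw [hsplit, measure_iUnion hdisj2 (fun n => (hAmeas n).inter (hfm n hS))]
    have hterm : ∀ n, nu (A n ∩ f n ⁻¹' S) = cp ((C n) ×ˢ S) := fun n => hkey n S hS
    rw [tsum_congr hterm]
    have hdisj3 : Pairwise (Function.onFun Disjoint (fun n => (C n) ×ˢ S)) :=
      fun i j hij => Set.disjoint_left.2 fun p hpi hpj =>
        Set.disjoint_left.1 (hCdisj hij) hpi.1 hpj.1
    rw [← measure_iUnion hdisj3 (fun n => (hCmeas n).prod hS), ← Set.iUnion_prod_const,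
      hCcov, Set.univ_prod, ← Measure.map_apply measurable_snd hS, hcp2]
  refine ⟨Gs, hGsm, hGsmap, ?_⟩
  -- cost identity
  have hcost : ∫⁻ x, (‖h0 (G x) - Gs x‖₊ : ℝ≥0∞) ^ (2:ℝ) ∂nu
      = ∫⁻ p, (‖h0 p.1 - p.2‖₊ : ℝ≥0∞) ^ (2:ℝ) ∂cp := by
    have hL : ∫⁻ x, (‖h0 (G x) - Gs x‖₊ : ℝ≥0∞) ^ (2:ℝ) ∂nu
        = ∑' n, ∫⁻ x in A n, (‖h0 (G x) - Gs x‖₊ : ℝ≥0∞) ^ (2:ℝ) ∂nu := by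
      rw [← lintegral_iUnion hAmeas hAdisj, hAcov, Measure.restrict_univ]
    have hR : ∫⁻ p, (‖h0 p.1 - p.2‖₊ : ℝ≥0∞) ^ (2:ℝ) ∂cp
        = ∑' n, ∫⁻ p in (C n) ×ˢ (Set.univ : Set E),
            (‖h0 p.1 - p.2‖₊ : ℝ≥0∞) ^ (2:ℝ) ∂cp := by
      rw [← lintegral_iUnion (fun n => (hCmeas n).prod MeasurableSet.univ)
        (fun i j hij => Set.disjoint_left.2 fun p hpi hpj =>
          Set.disjoint_left.1 (hCdisj hij) hpi.1 hpj.1),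
        ← Set.iUnion_prod_const, hCcov, Set.univ_prod]
      rw [show (Prod.snd ⁻¹' (Set.univ : Set E) : Set (_ × _)) = Set.univ from rfl,
        Measure.restrict_univ]
    rw [hL, hR]
    refine tsum_congr fun n => ?_
    have step1 : ∫⁻ x in A n, (‖h0 (G x) - Gs x‖₊ : ℝ≥0∞) ^ (2:ℝ) ∂nu
        = ∫⁻ x in A n, (‖c n - f n x‖₊ : ℝ≥0∞) ^ (2:ℝ) ∂nu := by
      refine setLIntegral_congr_fun (hAmeas n) (fun x hx => ?_)
      rw [hh0eq n (G x) hx, hGseq n x hx]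
    have step2 : ∫⁻ x in A n, (‖c n - f n x‖₊ : ℝ≥0∞) ^ (2:ℝ) ∂nu
        = ∫⁻ z, (‖c n - z‖₊ : ℝ≥0∞) ^ (2:ℝ)
            ∂((cp.restrict ((C n) ×ˢ (Set.univ : Set E))).map Prod.snd) := by
      rw [← hfmap n, lintegral_map (by
        exact (measurable_const.sub measurable_id).nnnorm.coe_nnreal_ennreal.pow_const _) (hfm n)]
    have step3 : ∫⁻ z, (‖c n - z‖₊ : ℝ≥0∞) ^ (2:ℝ)
            ∂((cp.restrict ((C n) ×ˢ (Set.univ : Set E))).map Prod.snd)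
        = ∫⁻ p in (C n) ×ˢ (Set.univ : Set E), (‖c n - p.2‖₊ : ℝ≥0∞) ^ (2:ℝ) ∂cp := by
      rw [lintegral_map (by
        exact (measurable_const.sub measurable_id).nnnorm.coe_nnreal_ennreal.pow_const _) measurable_snd]
    have step4 : ∫⁻ p in (C n) ×ˢ (Set.univ : Set E), (‖c n - p.2‖₊ : ℝ≥0∞) ^ (2:ℝ) ∂cp
        = ∫⁻ p in (C n) ×ˢ (Set.univ : Set E),
            (‖h0 p.1 - p.2‖₊ : ℝ≥0∞) ^ (2:ℝ) ∂cp := by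
      refine setLIntegral_congr_fun ((hCmeas n).prod MeasurableSet.univ)
        (fun p hp => ?_)
      rw [hh0eq n p.1 hp.1]
    rw [step1, step2, step3, step4]
  -- now Minkowski twice
  have hg1m : Measurable fun x => (‖h0 (G x) - Gs x‖₊ : ℝ≥0∞) :=
    ((hh0m.comp hGm).sub hGsm).nnnorm.coe_nnreal_ennreal
  have hg2m : Measurable fun p : E × E => (‖h0 p.1 - p.2‖₊ : ℝ≥0∞) :=
    ((hh0m.comp measurable_fst).sub measurable_snd).nnnorm.coe_nnreal_ennreal
  have hconst_int : ∀ (μ : Measure (EuclideanSpace ℝ (Fin d))) (_ : IsProbabilityMeasure μ),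
      True := fun _ _ => trivial
  have hrpow_const : ∀ (μ : Measure (EuclideanSpace ℝ (Fin d))), True := fun _ => trivial
  have hb1 : (∫⁻ x, (‖G x - Gs x‖₊ : ℝ≥0∞) ^ (2:ℝ) ∂nu) ^ (1/2:ℝ)
      ≤ ENNReal.ofReal ε
        + (∫⁻ x, (‖h0 (G x) - Gs x‖₊ : ℝ≥0∞) ^ (2:ℝ) ∂nu) ^ (1/2:ℝ) := by
    have hpt : ∀ x, (‖G x - Gs x‖₊ : ℝ≥0∞)
        ≤ ENNReal.ofReal ε + (‖h0 (G x) - Gs x‖₊ : ℝ≥0∞) := by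
      intro x
      rw [← enorm_eq_nnnorm, ← ofReal_norm_eq_enorm, ← enorm_eq_nnnorm, ← ofReal_norm_eq_enorm]
      have h1 : ‖G x - Gs x‖ ≤ ‖G x - h0 (G x)‖ + ‖h0 (G x) - Gs x‖ := by
        have := norm_add_le (G x - h0 (G x)) (h0 (G x) - Gs x)
        simpa using this
      have h2 : ‖G x - h0 (G x)‖ ≤ ε := by
        rw [← dist_eq_norm]
        exact (hh0dist (G x)).le
      calc ENNReal.ofReal ‖G x - Gs x‖
          ≤ ENNReal.ofReal (‖G x - h0 (G x)‖ + ‖h0 (G x) - Gs x‖) :=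
            ENNReal.ofReal_le_ofReal h1
        _ = ENNReal.ofReal ‖G x - h0 (G x)‖ + ENNReal.ofReal ‖h0 (G x) - Gs x‖ :=
            ENNReal.ofReal_add (norm_nonneg _) (norm_nonneg _)
        _ ≤ ENNReal.ofReal ε + ENNReal.ofReal ‖h0 (G x) - Gs x‖ :=
            add_le_add_left (ENNReal.ofReal_le_ofReal h2) _
    calc (∫⁻ x, (‖G x - Gs x‖₊ : ℝ≥0∞) ^ (2:ℝ) ∂nu) ^ (1/2:ℝ)
        ≤ (∫⁻ x, (ENNReal.ofReal ε + (‖h0 (G x) - Gs x‖₊ : ℝ≥0∞)) ^ (2:ℝ) ∂nu) ^ (1/2:ℝ) := by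
          refine ENNReal.rpow_le_rpow (lintegral_mono fun x => ?_) (by norm_num)
          exact ENNReal.rpow_le_rpow (hpt x) (by norm_num)
      _ ≤ (∫⁻ x, (ENNReal.ofReal ε : ℝ≥0∞) ^ (2:ℝ) ∂nu) ^ (1/2:ℝ)
            + (∫⁻ x, (‖h0 (G x) - Gs x‖₊ : ℝ≥0∞) ^ (2:ℝ) ∂nu) ^ (1/2:ℝ) :=
          ENNReal.lintegral_Lp_add_le aemeasurable_const hg1m.aemeasurable (by norm_num)
      _ = ENNReal.ofReal ε + (∫⁻ x, (‖h0 (G x) - Gs x‖₊ : ℝ≥0∞) ^ (2:ℝ) ∂nu) ^ (1/2:ℝ) := by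
          congr 1
          rw [lintegral_const, measure_univ, mul_one, ← ENNReal.rpow_mul]
          norm_num
  have hb2 : (∫⁻ p, (‖h0 p.1 - p.2‖₊ : ℝ≥0∞) ^ (2:ℝ) ∂cp) ^ (1/2:ℝ)
      ≤ ENNReal.ofReal ε + (∫⁻ p, edist p.1 p.2 ^ (2:ℝ) ∂cp) ^ (1/2:ℝ) := by
    have hpt : ∀ p : E × E, (‖h0 p.1 - p.2‖₊ : ℝ≥0∞)
        ≤ ENNReal.ofReal ε + edist p.1 p.2 := by
      intro p
      rw [← enorm_eq_nnnorm, ← ofReal_norm_eq_enorm, edist_dist, dist_eq_norm]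
      have h1 : ‖h0 p.1 - p.2‖ ≤ ‖h0 p.1 - p.1‖ + ‖p.1 - p.2‖ := by
        have := norm_add_le (h0 p.1 - p.1) (p.1 - p.2)
        simpa using this
      have h2 : ‖h0 p.1 - p.1‖ ≤ ε := by
        rw [← dist_eq_norm, dist_comm, ← dist_eq_norm'] at *
        exact (hh0dist p.1).le
      calc ENNReal.ofReal ‖h0 p.1 - p.2‖
          ≤ ENNReal.ofReal (‖h0 p.1 - p.1‖ + ‖p.1 - p.2‖) := ENNReal.ofReal_le_ofReal h1
        _ = ENNReal.ofReal ‖h0 p.1 - p.1‖ + ENNReal.ofReal ‖p.1 - p.2‖ :=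
            ENNReal.ofReal_add (norm_nonneg _) (norm_nonneg _)
        _ ≤ ENNReal.ofReal ε + ENNReal.ofReal ‖p.1 - p.2‖ :=
            add_le_add_left (ENNReal.ofReal_le_ofReal h2) _
    have hedm : Measurable fun p : E × E => edist p.1 p.2 := measurable_edist
    calc (∫⁻ p, (‖h0 p.1 - p.2‖₊ : ℝ≥0∞) ^ (2:ℝ) ∂cp) ^ (1/2:ℝ)
        ≤ (∫⁻ p, (ENNReal.ofReal ε + edist p.1 p.2) ^ (2:ℝ) ∂cp) ^ (1/2:ℝ) := by
          refine ENNReal.rpow_le_rpow (lintegral_mono fun p => ?_) (by norm_num)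
          exact ENNReal.rpow_le_rpow (hpt p) (by norm_num)
      _ ≤ (∫⁻ _p, (ENNReal.ofReal ε : ℝ≥0∞) ^ (2:ℝ) ∂cp) ^ (1/2:ℝ)
            + (∫⁻ p, edist p.1 p.2 ^ (2:ℝ) ∂cp) ^ (1/2:ℝ) :=
          ENNReal.lintegral_Lp_add_le aemeasurable_const hedm.aemeasurable (by norm_num)
      _ = ENNReal.ofReal ε + (∫⁻ p, edist p.1 p.2 ^ (2:ℝ) ∂cp) ^ (1/2:ℝ) := by
          congr 1
          rw [lintegral_const, measure_univ, mul_one, ← ENNReal.rpow_mul]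
          norm_num
  calc (∫⁻ x, (‖G x - Gs x‖₊ : ℝ≥0∞) ^ (2:ℝ) ∂nu) ^ (1/2:ℝ)
      ≤ ENNReal.ofReal ε
        + (∫⁻ x, (‖h0 (G x) - Gs x‖₊ : ℝ≥0∞) ^ (2:ℝ) ∂nu) ^ (1/2:ℝ) := hb1
    _ = ENNReal.ofReal ε + (∫⁻ p, (‖h0 p.1 - p.2‖₊ : ℝ≥0∞) ^ (2:ℝ) ∂cp) ^ (1/2:ℝ) := by
        rw [hcost]
    _ ≤ ENNReal.ofReal ε
        + (ENNReal.ofReal ε + (∫⁻ p, edist p.1 p.2 ^ (2:ℝ) ∂cp) ^ (1/2:ℝ)) :=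
        add_le_add_right hb2 _
    _ = (∫⁻ p, edist p.1 p.2 ^ (2:ℝ) ∂cp) ^ (1/2:ℝ) + 2 * ENNReal.ofReal ε := by
        ring

section pieces
variable {d : ℕ} (nu Pstar : Measure (EuclideanSpace ℝ (Fin d)))
  [IsProbabilityMeasure nu] [IsProbabilityMeasure Pstar]

-- eLpNorm as lintegral
lemma eLpNorm_two_eq (f : EuclideanSpace ℝ (Fin d) → EuclideanSpace ℝ (Fin d)) :
    eLpNorm f 2 nu = (∫⁻ x, (‖f x‖₊ : ℝ≥0∞) ^ (2:ℝ) ∂nu) ^ (1/2:ℝ) := by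
  rw [eLpNorm_eq_lintegral_rpow_enorm_toReal (by norm_num) (by norm_num)]
  simp only [enorm_eq_nnnorm]
  norm_num

-- nat pow 2 = rpow 2 in lintegral
lemma pow_two_eq_rpow (cp : Measure (EuclideanSpace ℝ (Fin d) × EuclideanSpace ℝ (Fin d))) :
    (∫⁻ p, edist p.1 p.2 ^ 2 ∂cp) = ∫⁻ p, edist p.1 p.2 ^ (2:ℝ) ∂cp := by
  refine lintegral_congr fun p => ?_
  rw [← ENNReal.rpow_natCast (edist p.1 p.2) 2]
  norm_num

-- upper bound: W2 ≤ eLpNorm for any admissible generator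
lemma W2_le_eLpNorm (G Gs : EuclideanSpace ℝ (Fin d) → EuclideanSpace ℝ (Fin d))
    (hGm : Measurable G) (hGsm : Measurable Gs) (hmap : Measure.map Gs nu = Pstar) :
    W2 (Measure.map G nu) Pstar ≤ eLpNorm (G - Gs) 2 nu := by
  set cpl : Measure (EuclideanSpace ℝ (Fin d) × EuclideanSpace ℝ (Fin d)) :=
    Measure.map (fun x => (G x, Gs x)) nu with hcpl
  have hpair : Measurable fun x => (G x, Gs x) := hGm.prodMk hGsm
  have h1 : cpl.map Prod.fst = Measure.map G nu := by
    rw [hcpl, Measure.map_map measurable_fst hpair]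
    rfl
  have h2 : cpl.map Prod.snd = Pstar := by
    rw [hcpl, Measure.map_map measurable_snd hpair]
    exact hmap
  have hcost : (∫⁻ p, edist p.1 p.2 ^ 2 ∂cpl) ^ (1/2:ℝ) = eLpNorm (G - Gs) 2 nu := by
    rw [hcpl, lintegral_map (measurable_edist.pow_const 2) hpair, eLpNorm_two_eq]
    congr 1
    refine lintegral_congr fun x => ?_
    rw [Pi.sub_apply, edist_dist, dist_eq_norm, ofReal_norm_eq_enorm, enorm_eq_nnnorm,
      ← ENNReal.rpow_natCast ((‖G x - Gs x‖₊ : ℝ≥0∞)) 2]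
    norm_num
  calc W2 (Measure.map G nu) Pstar
      ≤ ⨅ (_ : cpl.map Prod.fst = Measure.map G nu) (_ : cpl.map Prod.snd = Pstar),
          (∫⁻ p, edist p.1 p.2 ^ 2 ∂cpl) ^ (1/2:ℝ) := iInf_le _ cpl
    _ = (∫⁻ p, edist p.1 p.2 ^ 2 ∂cpl) ^ (1/2:ℝ) := by rw [iInf_pos h1, iInf_pos h2]
    _ = eLpNorm (G - Gs) 2 nu := hcost

end pieces


end Aux

/-- for an absolutely continuous input distribution `𝒩` with
finite second moment, a target `P* ∈ P₂(ℝ^d)`, and a generator `G ∈ L²(𝒩;ℝ^d)`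
with `P = G#𝒩`, the Wasserstein metric is the quotient of the `L²` loss:
`W₂(P, P*) = inf{‖G - G*‖_{L²(𝒩)} : G*#𝒩 = P*}`. -/
theorem wasserstein_eq_inf_L2_over_generators
    (d : ℕ) (nu Pstar : Measure (EuclideanSpace ℝ (Fin d)))
    [IsProbabilityMeasure nu] [IsProbabilityMeasure Pstar]
    (hac : nu ≪ volume)
    (hnu2 : MemLp id 2 nu) (hP2 : MemLp id 2 Pstar)
    (G : EuclideanSpace ℝ (Fin d) → EuclideanSpace ℝ (Fin d))
    (hGm : Measurable G) (hG2 : MemLp G 2 nu) :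
    W2 (Measure.map G nu) Pstar =
      ⨅ (Gs : EuclideanSpace ℝ (Fin d) → EuclideanSpace ℝ (Fin d))
        (_ : Measurable Gs) (_ : MemLp Gs 2 nu) (_ : Measure.map Gs nu = Pstar),
        eLpNorm (G - Gs) 2 nu := by
  haveI : IsProbabilityMeasure (Measure.map G nu) := Measure.isProbabilityMeasure_map hGm.aemeasurable
  rcases Nat.eq_zero_or_pos d with hd0 | hdpos
  · -- degenerate case: one-point space
    subst hd0
    haveI hsub : Subsingleton (EuclideanSpace ℝ (Fin 0)) :=
      ⟨fun a b => by ext i; exact Fin.elim0 i⟩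
    have hPeq : Measure.map G nu = Pstar := by
      refine Measure.ext fun S _ => ?_
      rcases Set.eq_empty_or_nonempty S with rfl | ⟨x, hx⟩
      · simp
      · have hSuniv : S = Set.univ := by
          ext y
          simp only [Set.mem_univ, iff_true]
          rwa [Subsingleton.elim y x]
        rw [hSuniv, measure_univ, measure_univ]
    have hW2 : W2 (Measure.map G nu) Pstar = 0 := by
      refine le_antisymm ?_ zero_le
      set cpl := Measure.map (fun x : EuclideanSpace ℝ (Fin 0) => (x, x))
        (Measure.map G nu) with hcpl
      have hdiag : Measurable fun x : EuclideanSpace ℝ (Fin 0) => (x, x) :=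
        measurable_id.prodMk measurable_id
      have h1 : cpl.map Prod.fst = Measure.map G nu := by
        rw [hcpl, Measure.map_map measurable_fst hdiag]
        have : (Prod.fst ∘ fun x : EuclideanSpace ℝ (Fin 0) => (x, x)) = id := rfl
        rw [this, Measure.map_id]
      have h2 : cpl.map Prod.snd = Pstar := by
        rw [hcpl, Measure.map_map measurable_snd hdiag]
        have : (Prod.snd ∘ fun x : EuclideanSpace ℝ (Fin 0) => (x, x)) = id := rfl
        rw [this, Measure.map_id, hPeq]
      have hcost : (∫⁻ p, edist p.1 p.2 ^ 2 ∂cpl) ^ (1/2:ℝ) = 0 := by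
        have hz : ∀ p : EuclideanSpace ℝ (Fin 0) × EuclideanSpace ℝ (Fin 0),
            edist p.1 p.2 ^ 2 = 0 := by
          intro p
          rw [Subsingleton.elim p.1 p.2, edist_self]
          simp
        rw [lintegral_congr hz, lintegral_zero]
        exact ENNReal.zero_rpow_of_pos (by norm_num)
      calc W2 (Measure.map G nu) Pstar
          ≤ ⨅ (_ : cpl.map Prod.fst = Measure.map G nu) (_ : cpl.map Prod.snd = Pstar),
              (∫⁻ p, edist p.1 p.2 ^ 2 ∂cpl) ^ (1/2:ℝ) := iInf_le _ cpl
        _ = 0 := by rw [iInf_pos h1, iInf_pos h2, hcost]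
    rw [hW2]
    refine le_antisymm zero_le ?_
    calc (⨅ (Gs : EuclideanSpace ℝ (Fin 0) → EuclideanSpace ℝ (Fin 0))
        (_ : Measurable Gs) (_ : MemLp Gs 2 nu) (_ : Measure.map Gs nu = Pstar),
        eLpNorm (G - Gs) 2 nu)
        ≤ eLpNorm (G - G) 2 nu := by
          refine iInf_le_of_le G ?_
          rw [iInf_pos hGm, iInf_pos hG2, iInf_pos hPeq]
      _ = 0 := by rw [sub_self, eLpNorm_zero]
  · have hd : d ≠ 0 := hdpos.ne'
    refine le_antisymm ?_ ?_
    · exact le_iInf fun Gs => le_iInf fun hGsm => le_iInf fun _ => le_iInf fun hmap =>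
        W2_le_eLpNorm nu Pstar G Gs hGm hGsm hmap
    · haveI : Nontrivial (EuclideanSpace ℝ (Fin d)) := by
        refine ⟨0, EuclideanSpace.single ⟨0, hdpos⟩ 1, fun h => ?_⟩
        have := congrArg (fun v : EuclideanSpace ℝ (Fin d) => v ⟨0, hdpos⟩) h
        simp [EuclideanSpace.single_apply] at this
      have hatom : ∀ x : EuclideanSpace ℝ (Fin d), nu {x} = 0 := fun x =>
        hac (measure_singleton x)
      refine ENNReal.le_of_forall_pos_le_add fun ε hε hWfin => ?_
      have hd3 : ((ε:ℝ≥0∞)/3) ≠ 0 := by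
        simp only [ne_eq, ENNReal.div_eq_zero_iff, ENNReal.coe_eq_zero, not_or]
        exact ⟨fun h => absurd h (by exact_mod_cast hε.ne'), by norm_num⟩
      have hlt : W2 (Measure.map G nu) Pstar
          < W2 (Measure.map G nu) Pstar + (ε:ℝ≥0∞)/3 :=
        ENNReal.lt_add_right hWfin.ne hd3
      rw [W2] at hlt
      obtain ⟨cp, hcp⟩ := iInf_lt_iff.1 hlt
      obtain ⟨hcp1, hcp'⟩ := iInf_lt_iff.1 hcp
      obtain ⟨hcp2, hcost⟩ := iInf_lt_iff.1 hcp'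
      haveI : IsProbabilityMeasure cp := by
        constructor
        have := congrArg (fun μ : Measure (EuclideanSpace ℝ (Fin d)) => μ Set.univ) hcp1
        simp only [Measure.map_apply measurable_fst MeasurableSet.univ,
          Set.preimage_univ, measure_univ] at this
        exact this
      obtain ⟨Gs, hGsm, hGsmap, hGsbound⟩ := construction hd nu Pstar hatom G hGm cp
        hcp1 hcp2 ((ε:ℝ)/6) (by positivity)
      rw [← pow_two_eq_rpow] at hGsbound
      have harith : 2 * ENNReal.ofReal ((ε:ℝ)/6) = (ε:ℝ≥0∞)/3 := by
        rw [← ENNReal.ofReal_ofNat 2, ← ENNReal.ofReal_mul (by norm_num)]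
        have : (2:ℝ) * ((ε:ℝ)/6) = (ε:ℝ)/3 := by ring
        rw [this, ENNReal.ofReal_div_of_pos (by norm_num), ENNReal.ofReal_coe_nnreal,
          ENNReal.ofReal_ofNat]
      rw [harith] at hGsbound
      have hWfin2 : W2 (Measure.map G nu) Pstar + (ε:ℝ≥0∞)/3 < ⊤ :=
        ENNReal.add_lt_top.2 ⟨hWfin, ENNReal.div_lt_top ENNReal.coe_ne_top (by norm_num)⟩
      have hGGs2 : MemLp (G - Gs) 2 nu := by
        refine ⟨(hGm.sub hGsm).aestronglyMeasurable, ?_⟩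
        rw [eLpNorm_two_eq]
        exact lt_of_le_of_lt hGsbound
          (lt_of_le_of_lt (add_le_add_left hcost.le _)
            (by exact lt_of_lt_of_le (ENNReal.add_lt_top.2
              ⟨hWfin2, ENNReal.div_lt_top ENNReal.coe_ne_top (by norm_num)⟩) le_rfl))
      have hGs2 : MemLp Gs 2 nu := by
        have := hG2.sub hGGs2
        have heq : G - (G - Gs) = Gs := sub_sub_cancel G Gs
        rwa [heq] at this
      calc (⨅ (Gs : EuclideanSpace ℝ (Fin d) → EuclideanSpace ℝ (Fin d))
          (_ : Measurable Gs) (_ : MemLp Gs 2 nu) (_ : Measure.map Gs nu = Pstar),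
          eLpNorm (G - Gs) 2 nu)
          ≤ eLpNorm (G - Gs) 2 nu := by
            refine iInf_le_of_le Gs ?_
            rw [iInf_pos hGsm, iInf_pos hGs2, iInf_pos hGsmap]
        _ ≤ (∫⁻ p, edist p.1 p.2 ^ 2 ∂cp) ^ (1/2:ℝ) + (ε:ℝ≥0∞)/3 := by
            rw [eLpNorm_two_eq]
            exact hGsbound
        _ ≤ (W2 (Measure.map G nu) Pstar + (ε:ℝ≥0∞)/3) + (ε:ℝ≥0∞)/3 :=
            add_le_add_left hcost.le _
        _ ≤ W2 (Measure.map G nu) Pstar + (ε:ℝ≥0∞) := by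
            rw [add_assoc]
            refine add_le_add_right ?_ _
            calc (ε:ℝ≥0∞)/3 + (ε:ℝ≥0∞)/3
                ≤ (ε:ℝ≥0∞)/3 + (ε:ℝ≥0∞)/3 + (ε:ℝ≥0∞)/3 := le_self_add
              _ = (ε:ℝ≥0∞) := ENNReal.add_thirds _
end

section
/- Let λᵢ ∈ (0,1], 0 < c ≤ √2, and consider forced oscillators ÿⁱ + cλᵢẏⁱ + λᵢyⁱ = qⁱ with yⁱ(0) = ẏⁱ(0) = 0. Then √λᵢ |yⁱ(t)| ≤ |qⁱ| t^{3/2}/√c for all t ≥ 0, and consequently Σᵢ λᵢ yⁱ(t)² ≤ (t³/c) Σᵢ (qⁱ)². -/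
open Real Filter Topology

/-- forced underdamped oscillators
`ÿⁱ + cλᵢẏⁱ + λᵢyⁱ = qⁱ`, `yⁱ(0) = ẏⁱ(0) = 0`, with `λᵢ ∈ (0,1]`, `0 < c ≤ √2`,
satisfy `√λᵢ |yⁱ(t)| ≤ |qⁱ| t^{3/2}/√c`, and hence
`Σᵢ λᵢ yⁱ(t)² ≤ (t³/c) Σᵢ (qⁱ)²`. -/
theorem forced_oscillator_bound
    (lam q : ℕ → ℝ) (hlam : ∀ i, 0 < lam i ∧ lam i ≤ 1)
    (c : ℝ) (hc0 : 0 < c) (hc2 : c ≤ Real.sqrt 2)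
    (hq : Summable (fun i => (q i) ^ 2))
    (y v : ℕ → ℝ → ℝ)
    (hy : ∀ i t, HasDerivAt (y i) (v i t) t)
    (hv : ∀ i t, HasDerivAt (v i) (q i - c * lam i * v i t - lam i * y i t) t)
    (hy0 : ∀ i, y i 0 = 0) (hv0 : ∀ i, v i 0 = 0) :
    (∀ i, ∀ t : ℝ, 0 ≤ t →
      Real.sqrt (lam i) * |y i t| ≤ |q i| * t ^ ((3:ℝ)/2) / Real.sqrt c) ∧
    (∀ t : ℝ, 0 ≤ t →
      ∑' i, lam i * (y i t) ^ 2 ≤ t ^ 3 / c * ∑' i, (q i) ^ 2) := by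
  -- energy estimate: √(λ y² + v²) ≤ |q| t
  have key : ∀ i, ∀ t : ℝ, 0 ≤ t →
      Real.sqrt (lam i) * |y i t| ≤ |q i| * t ∧ |v i t| ≤ |q i| * t := by
    intro i t ht
    obtain ⟨hl0, hl1⟩ := hlam i
    have base : ∀ ε : ℝ, 0 < ε →
        Real.sqrt (lam i * (y i t)^2 + (v i t)^2 + ε^2) ≤ |q i| * t + ε := by
      intro ε hε
      set E : ℝ → ℝ := fun s => lam i * (y i s)^2 + (v i s)^2 + ε^2 with hEdef
      have hEpos : ∀ s, 0 < E s := by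
        intro s; simp only [hEdef]; positivity
      have hEd : ∀ s, HasDerivAt E (2*(q i)*(v i s) - 2*c*(lam i)*(v i s)^2) s := by
        intro s
        have h1 : HasDerivAt (fun u => lam i * (y i u)^2)
            (lam i * ((2:ℕ) * (y i s)^1 * v i s)) s := ((hy i s).pow 2).const_mul _
        have h2 : HasDerivAt (fun u => (v i u)^2)
            ((2:ℕ) * (v i s)^1 * (q i - c * lam i * v i s - lam i * y i s)) s :=
          (hv i s).pow 2
        have := (h1.add h2).add_const (ε^2)
        exact this.congr_deriv (by push_cast; ring)
      set h : ℝ → ℝ := fun s => |q i| * s + ε - Real.sqrt (E s) with hhdef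
      have hhd : ∀ s, HasDerivAt h
          (|q i| - (2*(q i)*(v i s) - 2*c*(lam i)*(v i s)^2) / (2 * Real.sqrt (E s))) s := by
        intro s
        have hs := (hEd s).sqrt (ne_of_gt (hEpos s))
        have hl : HasDerivAt (fun u : ℝ => |q i| * u + ε) (|q i|) s := by
          simpa using ((hasDerivAt_id s).const_mul (|q i|)).add_const ε
        exact hl.sub hs
      have hnn : ∀ s, 0 ≤ |q i| - (2*(q i)*(v i s) - 2*c*(lam i)*(v i s)^2)
          / (2 * Real.sqrt (E s)) := by
        intro s
        rw [sub_nonneg, div_le_iff₀ (by positivity)]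
        have hvE : |v i s| ≤ Real.sqrt (E s) := by
          rw [← Real.sqrt_sq_eq_abs]
          apply Real.sqrt_le_sqrt
          simp only [hEdef]
          nlinarith [sq_nonneg (y i s), sq_nonneg ε]
        have h1 : q i * v i s ≤ |q i| * |v i s| := by
          calc q i * v i s ≤ |q i * v i s| := le_abs_self _
            _ = |q i| * |v i s| := abs_mul _ _
        have h2 : |q i| * |v i s| ≤ |q i| * Real.sqrt (E s) :=
          mul_le_mul_of_nonneg_left hvE (abs_nonneg _)
        nlinarith [mul_nonneg (mul_nonneg hc0.le hl0.le) (sq_nonneg (v i s))]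
      have hmono : Monotone h := by
        apply monotone_of_deriv_nonneg (fun s => (hhd s).differentiableAt)
        intro s
        rw [(hhd s).deriv]
        exact hnn s
      have h0 : h 0 = 0 := by
        simp only [hhdef, hEdef, hy0, hv0]
        rw [mul_zero, zero_add]
        simp [Real.sqrt_sq hε.le]
      have := hmono ht
      rw [h0] at this
      simp only [hhdef] at this
      linarith
    constructor
    · apply le_of_forall_pos_le_add
      intro ε hε
      calc Real.sqrt (lam i) * |y i t|
          = Real.sqrt (lam i * (y i t)^2) := by
            rw [Real.sqrt_mul hl0.le, Real.sqrt_sq_eq_abs]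
        _ ≤ Real.sqrt (lam i * (y i t)^2 + (v i t)^2 + ε^2) := by
            apply Real.sqrt_le_sqrt; nlinarith [sq_nonneg (v i t), sq_nonneg ε]
        _ ≤ |q i| * t + ε := base ε hε
    · apply le_of_forall_pos_le_add
      intro ε hε
      calc |v i t| = Real.sqrt ((v i t)^2) := (Real.sqrt_sq_eq_abs _).symm
        _ ≤ Real.sqrt (lam i * (y i t)^2 + (v i t)^2 + ε^2) := by
            apply Real.sqrt_le_sqrt
            nlinarith [mul_nonneg hl0.le (sq_nonneg (y i t)), sq_nonneg ε]
        _ ≤ |q i| * t + ε := base ε hε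
  -- position bound: |y t| ≤ |q| t² / 2
  have key2 : ∀ i, ∀ t : ℝ, 0 ≤ t → |y i t| ≤ |q i| * t^2 / 2 := by
    intro i t ht
    have habs : ∀ σ : ℝ, σ = 1 ∨ σ = -1 →
        σ * y i t ≤ |q i| * t^2 / 2 := by
      intro σ hσ
      set w : ℝ → ℝ := fun s => |q i| * s^2/2 - σ * y i s with hwdef
      have hwd : ∀ s, HasDerivAt w (|q i| * s - σ * v i s) s := by
        intro s
        have h1 : HasDerivAt (fun u : ℝ => |q i| * u^2/2) (|q i| * s) s := by
          have := ((hasDerivAt_pow 2 s).const_mul (|q i|)).div_const 2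
          exact this.congr_deriv (by push_cast; ring)
        exact h1.sub ((hy i s).const_mul σ)
      have hmono : MonotoneOn w (Set.Ici (0:ℝ)) := by
        apply monotoneOn_of_deriv_nonneg (convex_Ici 0)
        · exact (Differentiable.continuous (fun s => (hwd s).differentiableAt)).continuousOn
        · exact (Differentiable.differentiableOn (fun s => (hwd s).differentiableAt))
        · intro x hx
          rw [interior_Ici] at hx
          rw [(hwd x).deriv, sub_nonneg]
          have h1 : σ * v i x ≤ |v i x| := by
            rcases hσ with h | h <;> rw [h]
            · simpa using le_abs_self (v i x)
            · simpa using neg_le_abs (v i x)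
          exact h1.trans ((key i x (le_of_lt hx)).2)
      have := hmono (Set.self_mem_Ici) (Set.mem_Ici.2 ht) ht
      simp only [hwdef, hy0] at this
      nlinarith [this]
    have h1 := habs 1 (Or.inl rfl)
    have h2 := habs (-1) (Or.inr rfl)
    rw [abs_le']
    constructor
    · linarith [h1]
    · linarith [h2]
  -- combined pointwise bound
  have main : ∀ i, ∀ t : ℝ, 0 ≤ t →
      Real.sqrt (lam i) * |y i t| ≤ |q i| * t ^ ((3:ℝ)/2) / Real.sqrt c := by
    intro i t ht
    obtain ⟨hl0, hl1⟩ := hlam i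
    have h32 : t ^ ((3:ℝ)/2) = Real.sqrt t ^ 3 := by
      rw [Real.sqrt_eq_rpow, ← Real.rpow_natCast (t ^ ((1:ℝ)/2)) 3, ← Real.rpow_mul ht]
      norm_num
    have hst : Real.sqrt t ^ 2 = t := Real.sq_sqrt ht
    have hsc : Real.sqrt c ^ 2 = c := Real.sq_sqrt hc0.le
    have hsc0 : 0 < Real.sqrt c := Real.sqrt_pos.2 hc0
    have hcle2 : c ≤ 2 := by
      nlinarith [Real.sq_sqrt (by norm_num : (0:ℝ) ≤ 2), Real.sqrt_nonneg 2,
        sq_nonneg (Real.sqrt 2 - 2)]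
    rw [h32, le_div_iff₀ hsc0]
    rcases le_total t c with hcase | hcase
    · -- small time: quadratic bound
      have hy2 := key2 i t ht
      have hstc : Real.sqrt t ≤ Real.sqrt c := Real.sqrt_le_sqrt hcase
      have hsl : Real.sqrt (lam i) ≤ 1 := by
        rw [show (1:ℝ) = Real.sqrt 1 by simp]
        exact Real.sqrt_le_sqrt hl1
      have hstsc : Real.sqrt t * Real.sqrt c ≤ 2 := by
        nlinarith [Real.sqrt_nonneg t, Real.sqrt_nonneg c,
          mul_le_mul_of_nonneg_right hstc hsc0.le]
      calc Real.sqrt (lam i) * |y i t| * Real.sqrt c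
          ≤ 1 * (|q i| * t^2 / 2) * Real.sqrt c := by
            apply mul_le_mul_of_nonneg_right _ hsc0.le
            exact mul_le_mul hsl hy2 (abs_nonneg _) one_pos.le
        _ = |q i| * Real.sqrt t ^ 3 * (Real.sqrt t * Real.sqrt c / 2) := by
            have ht4 : t ^ 2 = Real.sqrt t ^ 4 := by
              linear_combination (-(t + Real.sqrt t ^ 2)) * hst
            rw [ht4]; ring
        _ ≤ |q i| * Real.sqrt t ^ 3 * 1 := by
            apply mul_le_mul_of_nonneg_left _ (by positivity)
            linarith
        _ = |q i| * Real.sqrt t ^ 3 := mul_one _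
    · -- large time: linear bound
      have h1 := (key i t ht).1
      have hcs : Real.sqrt c ≤ Real.sqrt t := Real.sqrt_le_sqrt hcase
      calc Real.sqrt (lam i) * |y i t| * Real.sqrt c
          ≤ (|q i| * t) * Real.sqrt c := by
            apply mul_le_mul_of_nonneg_right h1 hsc0.le
        _ = |q i| * Real.sqrt t ^ 2 * Real.sqrt c := by rw [hst]
        _ ≤ |q i| * Real.sqrt t ^ 2 * Real.sqrt t := by
            apply mul_le_mul_of_nonneg_left hcs (by positivity)
        _ = |q i| * Real.sqrt t ^ 3 := by ring
  refine ⟨main, ?_⟩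
  intro t ht
  have ptw : ∀ i, lam i * (y i t)^2 ≤ t^3/c * (q i)^2 := by
    intro i
    obtain ⟨hl0, hl1⟩ := hlam i
    have h := main i t ht
    have hsq := mul_self_le_mul_self (by positivity) h
    have e1 : (Real.sqrt (lam i) * |y i t|) * (Real.sqrt (lam i) * |y i t|)
        = lam i * (y i t)^2 := by
      have := Real.sq_sqrt hl0.le
      nlinarith [sq_abs (y i t)]
    have h32 : (t ^ ((3:ℝ)/2)) ^ 2 = t ^ 3 := by
      rw [← Real.rpow_natCast (t ^ ((3:ℝ)/2)) 2, ← Real.rpow_mul ht,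
        ← Real.rpow_natCast t 3]
      norm_num
    have e2 : (|q i| * t ^ ((3:ℝ)/2) / Real.sqrt c) * (|q i| * t ^ ((3:ℝ)/2) / Real.sqrt c)
        = t^3/c * (q i)^2 := by
      rw [div_mul_div_comm]
      have h1 : |q i| * t ^ ((3:ℝ)/2) * (|q i| * t ^ ((3:ℝ)/2))
          = (q i)^2 * (t ^ ((3:ℝ)/2))^2 := by
        rw [← sq_abs (q i)]; ring
      rw [h1, h32, Real.mul_self_sqrt hc0.le]
      ring
    rw [e1, e2] at hsq
    exact hsq
  have hsum : Summable (fun i => t^3/c * (q i)^2) := hq.mul_left _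
  have hsum2 : Summable (fun i => lam i * (y i t)^2) := by
    apply Summable.of_nonneg_of_le _ ptw hsum
    intro i
    have := (hlam i).1
    positivity
  calc ∑' i, lam i * (y i t)^2 ≤ ∑' i, t^3/c * (q i)^2 := Summable.tsum_le_tsum ptw hsum2 hsum
    _ = t^3/c * ∑' i, (q i)^2 := tsum_mul_left
end

section
/- Let λ > 0, 0 < c ≤ √2 ensure the underdamped regime, and consider u solving ü + cλu̇ + λu = 0 with u(0) = u₀, u̇(0) = 0 for each coordinate of an ℓ² sequence with Σ u₀ⁱ² < ∞. Then Σᵢ λᵢ uⁱ(t)² ≤ (2/(e·c·t)) Σᵢ (u₀ⁱ)² for all t > 0. -/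
open Real Filter Topology

theorem free_osc_pointwise (lam c u0 : ℝ) (hlam0 : 0 < lam) (hlam1 : lam ≤ 1)
    (hc0 : 0 < c) (hc2sq : c ^ 2 ≤ 2)
    (u v : ℝ → ℝ) (hu : ∀ t, HasDerivAt u (v t) t)
    (hv : ∀ t, HasDerivAt v (-(c * lam) * v t - lam * u t) t)
    (hu0 : u 0 = u0) (hv0 : v 0 = 0) (t : ℝ) (ht : 0 < t) :
    lam * u t ^ 2 ≤ 2 / (Real.exp 1 * c * t) * u0 ^ 2 := by
  set V : ℝ → ℝ := fun x => lam * (u x * u x) + v x * v x + c * lam * (u x * v x) with hVdef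
  have hV : ∀ x, HasDerivAt V (-(c * lam) * V x) x := by
    intro x
    have h1 := (((hu x).mul (hu x)).const_mul lam)
    have h2 := (hv x).mul (hv x)
    have h3 := (((hu x).mul (hv x)).const_mul (c * lam))
    have := (h1.add h2).add h3
    refine this.congr_deriv ?_
    simp only [hVdef]
    ring
  set g : ℝ → ℝ := fun x => V x * Real.exp (c * lam * x) with hgdef
  have hg : ∀ x, HasDerivAt g 0 x := by
    intro x
    have he : HasDerivAt (fun x : ℝ => Real.exp (c * lam * x))
        (Real.exp (c * lam * x) * (c * lam)) x := by
      simpa using ((hasDerivAt_id x).const_mul (c * lam)).exp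
    have := (hV x).mul he
    refine this.congr_deriv ?_
    ring
  have hdiff : Differentiable ℝ g := fun x => (hg x).differentiableAt
  have hconst : g t = g 0 := by
    have := is_const_of_deriv_eq_zero hdiff (fun x => (hg x).deriv) t 0
    exact this
  have hVt : V t * Real.exp (c * lam * t) = lam * (u0 * u0) := by
    have : g t = g 0 := hconst
    simp only [hgdef] at this
    rw [this]
    simp only [hVdef]
    rw [hu0, hv0]
    simp
  have hexp := Real.exp_pos (c * lam * t)
  have hVval : V t = lam * u0 ^ 2 * Real.exp (-(c * lam * t)) := by
    rw [Real.exp_neg]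
    field_simp
    rw [show lam * c * t = c * lam * t by ring]
    nlinarith [hVt]
  -- lam * u t ^ 2 ≤ 2 * V t
  have hlow : lam * u t ^ 2 ≤ 2 * V t := by
    have h1 : 0 ≤ lam * (u t + c * v t) ^ 2 := mul_nonneg hlam0.le (sq_nonneg _)
    have h2 : 0 ≤ (2 - c ^ 2 * lam) * (v t) ^ 2 := by
      apply mul_nonneg _ (sq_nonneg _)
      nlinarith
    simp only [hVdef]
    nlinarith
  -- lam * exp(-(c lam t)) ≤ 1 / (e c t)
  have hx0 : 0 < c * lam * t := by positivity
  have h1 : c * lam * t * Real.exp 1 ≤ Real.exp (c * lam * t) := by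
    have ha := Real.add_one_le_exp (c * lam * t - 1)
    have hb : c * lam * t ≤ Real.exp (c * lam * t - 1) := by linarith
    calc c * lam * t * Real.exp 1 ≤ Real.exp (c * lam * t - 1) * Real.exp 1 := by
          nlinarith [Real.exp_pos 1]
      _ = Real.exp (c * lam * t) := by rw [← Real.exp_add]; ring_nf
  have hkey : lam * Real.exp (-(c * lam * t)) ≤ 1 / (Real.exp 1 * c * t) := by
    rw [Real.exp_neg, ← div_eq_mul_inv, div_le_div_iff₀ hexp (by positivity)]
    nlinarith
  calc lam * u t ^ 2 ≤ 2 * V t := hlow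
    _ = 2 * (lam * Real.exp (-(c * lam * t))) * u0 ^ 2 := by rw [hVval]; ring
    _ ≤ 2 * (1 / (Real.exp 1 * c * t)) * u0 ^ 2 := by
        have := sq_nonneg u0
        nlinarith
    _ = 2 / (Real.exp 1 * c * t) * u0 ^ 2 := by ring

/-- free underdamped oscillators
`üⁱ + cλᵢu̇ⁱ + λᵢuⁱ = 0`, `uⁱ(0) = u₀ⁱ`, `u̇ⁱ(0) = 0`, with `λᵢ ∈ (0,1]`,
`0 < c ≤ √2` and `Σᵢ (u₀ⁱ)² < ∞`, satisfy
`Σᵢ λᵢ uⁱ(t)² ≤ (2/(e·c·t)) Σᵢ (u₀ⁱ)²` for all `t > 0`. -/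
theorem free_oscillator_sum_bound
    (lam u₀ : ℕ → ℝ) (hlam : ∀ i, 0 < lam i ∧ lam i ≤ 1)
    (c : ℝ) (hc0 : 0 < c) (hc2 : c ≤ Real.sqrt 2)
    (hu₀ : Summable (fun i => (u₀ i) ^ 2))
    (u v : ℕ → ℝ → ℝ)
    (hu : ∀ i t, HasDerivAt (u i) (v i t) t)
    (hv : ∀ i t, HasDerivAt (v i) (-(c * lam i) * v i t - lam i * u i t) t)
    (hu0 : ∀ i, u i 0 = u₀ i) (hv0 : ∀ i, v i 0 = 0) :
    ∀ t : ℝ, 0 < t →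
      ∑' i, lam i * (u i t) ^ 2 ≤ 2 / (Real.exp 1 * c * t) * ∑' i, (u₀ i) ^ 2 := by
  intro t ht
  have hc2sq : c ^ 2 ≤ 2 := by
    have h := Real.sq_sqrt (by norm_num : (2:ℝ) ≥ 0)
    nlinarith [Real.sqrt_nonneg 2]
  have hpt : ∀ i, lam i * (u i t) ^ 2 ≤ 2 / (Real.exp 1 * c * t) * (u₀ i) ^ 2 :=
    fun i => free_osc_pointwise (lam i) c (u₀ i) (hlam i).1 (hlam i).2 hc0 hc2sq
      (u i) (v i) (hu i) (hv i) (hu0 i) (hv0 i) t ht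
  have hS : Summable (fun i => 2 / (Real.exp 1 * c * t) * (u₀ i) ^ 2) := hu₀.mul_left _
  have hS2 : Summable (fun i => lam i * (u i t) ^ 2) := by
    apply Summable.of_nonneg_of_le _ hpt hS
    intro i
    exact mul_nonneg (hlam i).1.le (sq_nonneg _)
  calc ∑' i, lam i * (u i t) ^ 2 ≤ ∑' i, 2 / (Real.exp 1 * c * t) * (u₀ i) ^ 2 :=
        Summable.tsum_le_tsum hpt hS2 hS
    _ = 2 / (Real.exp 1 * c * t) * ∑' i, (u₀ i) ^ 2 := tsum_mul_left
end
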